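/- Let q be a power of 2, let F be a finite field with q^6 elements, and let c ∈ F. For (x₀,x₁,x₂,x₃,x₄,x₅) ∈ F⁶ let P(x₀,...,x₅) be the determinant of the 6×6 matrix with rows (x₀, 1, 0, 1, 0, c), (c^q, x₁, 1, 0, 1, 0), (0, c^{q²}, x₂, 1, 0, 1), (1, 0, c^{q³}, x₃, 1, 0), (0, 1, 0, c^{q⁴}, x₄, 1), (1, 0, 1, 0, c^{q⁵}, x₅); for d ∈ F and y₁,y₂,y₃,y₄ ∈ F let G(d; y₁,y₂,y₃,y₄) be the determinant of the 5×5 matrix with rows (1, 0, 1, 0, d), (y₁, 1, 0, 1, 0), (d^{q²}, y₂, 1, 0, 1), (0, d^{q³}, y₃, 1, 0), (1, 0, d^{q⁴}, y₄, 1); and for j = 0,...,5 let Q_j(x₀,...,x₅) = G(c^{q^j}; x_{(1+j) mod 6}, x_{(2+j) mod 6}, x_{(3+j) mod 6}, x_{(4+j) mod 6}). If neither the tuple (0,0,0,0,0,0) nor any tuple (x₀,...,x₅) with all coordinates nonzero satisfies simultaneously P = 0 and Q_j = 0 for all j = 0,...,5, then the map f_c : F → F defined by f_c(x) = x^q + x^{q^3}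 + c·x^{q^5} is scattered. -/

import Mathlib

noncomputable section

def F1 (q : ℕ) {F : Type*} [Field F] (c : F) : F :=
  c ^ (q ^ 4 + 2 * q ^ 3 + q ^ 2 + q + 1) + c ^ (q ^ 4 + q ^ 3 + q ^ 2 + 1)
    + c ^ (q ^ 3 + q + 1) + c + c ^ (2 * q ^ 3 + q ^ 2 + q) + c ^ (q ^ 3 + q ^ 2 + q)
    + c ^ (q ^ 3) + 1

def F2 (q : ℕ) {F : Type*} [Field F] (c : F) : F :=
  c ^ (q ^ 3 + q ^ 2 + 2 * q + 2) + c ^ (q ^ 2 + q + 2) + c ^ (q ^ 3 + 2 * q ^ 2 + 2 * q + 1)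
    + c ^ (2 * q ^ 3 + 2 * q ^ 2 + q + 1) + c ^ (q ^ 2 + q + 1) + c ^ (q ^ 3 + q + 1)
    + c ^ (q ^ 3 + q ^ 2 + 1) + c + c ^ (2 * q ^ 3 + q ^ 2 + q) + c ^ (q ^ 3 + q ^ 2 + q)
    + c ^ (q ^ 3) + 1

def F3 (q : ℕ) {F : Type*} [Field F] (c : F) : F := c ^ (q ^ 2 + q + 1) + 1

def F4 (q : ℕ) {F : Type*} [Field F] (c : F) : F :=
  c ^ (2 * q ^ 2 + q + 4) + c ^ (3 * q ^ 2 + 2 * q + 3) + c ^ (q ^ 2 + 2 * q + 3)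
    + c ^ (3 * q ^ 2 + q + 3) + c ^ (q ^ 2 + q + 3) + c ^ (2 * q ^ 2 + 3) + c ^ (q ^ 2 + 3)
    + c ^ (4 * q ^ 2 + q + 2) + c ^ (q + 2) + c ^ (3 * q ^ 2 + 2) + c ^ 2
    + c ^ (3 * q ^ 2 + 2 * q + 1) + c ^ (q ^ 2 + 2 * q + 1) + c ^ (3 * q ^ 2 + q + 1)
    + c ^ (q ^ 2 + q + 1) + c ^ (3 * q ^ 2 + 1) + c + c ^ (2 * q ^ 2 + q) + c ^ (2 * q ^ 2)
    + c ^ (q ^ 2)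

def F5 (q : ℕ) {F : Type*} [Field F] (c : F) : F :=
  c ^ (2 * q ^ 2 + q + 2) + c ^ (q ^ 2 + q + 2) + c ^ (2 * q ^ 2 + 2)
    + c ^ (2 * q ^ 2 + q + 1) + c ^ (q ^ 2 + q + 1) + 1

def frakC (q : ℕ) (F : Type*) [Field F] : Set F :=
  {c | c ^ (q ^ 2) ≠ c ∧ F1 q c = 0 ∧ F2 q c = 0 ∧ F3 q c * F4 q c * F5 q c ≠ 0}

def IsScattered (q : ℕ) {F : Type*} [Field F] (f : F → F) : Prop :=
  ∀ y z : F, y ≠ 0 → z ≠ 0 → f y * z = f z * y → ∃ l : F, l ^ q = l ∧ y = l * z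

def Pdet (q : ℕ) {F : Type*} [Field F] (c : F) (x : Fin 6 → F) : F :=
  Matrix.det !![x 0, 1, 0, 1, 0, c;
    c ^ q, x 1, 1, 0, 1, 0;
    0, c ^ (q ^ 2), x 2, 1, 0, 1;
    1, 0, c ^ (q ^ 3), x 3, 1, 0;
    0, 1, 0, c ^ (q ^ 4), x 4, 1;
    1, 0, 1, 0, c ^ (q ^ 5), x 5]

def Gdet (q : ℕ) {F : Type*} [Field F] (d y1 y2 y3 y4 : F) : F :=
  Matrix.det !![1, 0, 1, 0, d;
    y1, 1, 0, 1, 0;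
    d ^ (q ^ 2), y2, 1, 0, 1;
    0, d ^ (q ^ 3), y3, 1, 0;
    1, 0, d ^ (q ^ 4), y4, 1]

open Fin.NatCast in
def Qdet (q : ℕ) {F : Type*} [Field F] (c : F) (j : ℕ) (x : Fin 6 → F) : F :=
  Gdet q (c ^ (q ^ j)) (x ((1 + j : ℕ) : Fin 6)) (x ((2 + j : ℕ) : Fin 6))
    (x ((3 + j : ℕ) : Fin 6)) (x ((4 + j : ℕ) : Fin 6))

set_option maxRecDepth 8000 in
set_option maxHeartbeats 1000000 in
theorem statement18 (e q : ℕ) (he : 1 ≤ e) (hq : q = 2 ^ e)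
    (F : Type) [Field F] [Fintype F] (hF : Fintype.card F = q ^ 6) (c : F)
    (h0 : ¬ (Pdet q c (fun _ => 0) = 0 ∧ ∀ j : ℕ, j < 6 → Qdet q c j (fun _ => 0) = 0))
    (hx : ∀ x : Fin 6 → F, (∀ i, x i ≠ 0) →
      ¬ (Pdet q c x = 0 ∧ ∀ j : ℕ, j < 6 → Qdet q c j x = 0)) :
    IsScattered q (fun x : F => x ^ q + x ^ (q ^ 3) + c * x ^ (q ^ 5)) := by
  intro y z hy hz hyz
  simp only at hyz
  -- basic numerics
  have hq2 : 2 ≤ q := by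
    subst hq
    calc 2 = 2 ^ 1 := (pow_one 2).symm
    _ ≤ 2 ^ e := Nat.pow_le_pow_right (by norm_num) he
  have hq0 : q ≠ 0 := by omega
  -- characteristic 2
  have hp2 : CharP F 2 := by
    obtain ⟨n, hp, hcard⟩ := FiniteField.card F (ringChar F)
    have hdvd : ringChar F ∣ 2 ^ (e * 6) := by
      rw [pow_mul, ← hq, ← hF, hcard]
      exact dvd_pow_self _ n.ne_zero
    have h2 : ringChar F = 2 :=
      (Nat.prime_dvd_prime_iff_eq hp Nat.prime_two).mp (hp.dvd_of_dvd_pow hdvd)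
    exact h2 ▸ ringChar.charP F
  haveI := hp2
  haveI : Fact (Nat.Prime 2) := ⟨Nat.prime_two⟩
  -- Frobenius facts
  have hpow6 : ∀ x : F, x ^ q ^ 6 = x := by
    intro x
    have := FiniteField.pow_card x
    rwa [hF] at this
  have hcomp : ∀ (x : F) (a b : ℕ), (x ^ q ^ a) ^ q ^ b = x ^ q ^ (a + b) := by
    intro x a b; rw [← pow_mul, ← pow_add]
  have hred : ∀ (x : F) (k : ℕ), x ^ q ^ (k + 6) = x ^ q ^ k := by
    intro x k
    rw [pow_add, pow_mul]
    exact hpow6 _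
  have h7 : ∀ x : F, x ^ q ^ 7 = x ^ q ^ 1 := fun x => by
    rw [show (7 : ℕ) = 1 + 6 by norm_num]; exact hred x 1
  have h8 : ∀ x : F, x ^ q ^ 8 = x ^ q ^ 2 := fun x => by
    rw [show (8 : ℕ) = 2 + 6 by norm_num]; exact hred x 2
  have h9 : ∀ x : F, x ^ q ^ 9 = x ^ q ^ 3 := fun x => by
    rw [show (9 : ℕ) = 3 + 6 by norm_num]; exact hred x 3
  have h10 : ∀ x : F, x ^ q ^ 10 = x ^ q ^ 4 := fun x => by
    rw [show (10 : ℕ) = 4 + 6 by norm_num]; exact hred x 4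
  have h11 : ∀ x : F, x ^ q ^ 11 = x ^ q ^ 5 := fun x => by
    rw [show (11 : ℕ) = 5 + 6 by norm_num]; exact hred x 5
  set φ : ℕ → F →+* F := fun t => iterateFrobenius F 2 (e * t) with hφdef
  have hphi : ∀ (t : ℕ) (x : F), φ t x = x ^ q ^ t := by
    intro t x
    rw [hφdef]
    simp only [iterateFrobenius_def]
    rw [hq, ← pow_mul]
  -- the slope m
  obtain ⟨m, hmz⟩ : ∃ m : F, z ^ q + z ^ q ^ 3 + c * z ^ q ^ 5 = m * z :=
    ⟨(z ^ q + z ^ q ^ 3 + c * z ^ q ^ 5) / z, (div_mul_cancel₀ _ hz).symm⟩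
  have hmy : y ^ q + y ^ q ^ 3 + c * y ^ q ^ 5 = m * y := by
    have h1 : (y ^ q + y ^ q ^ 3 + c * y ^ q ^ 5) * z = (m * y) * z := by
      rw [hyz, hmz]; ring
    exact mul_right_cancel₀ hz h1
  by_contra hcon
  push_neg at hcon
  -- the Dickson matrix
  set xm : Fin 6 → F := fun i => m ^ q ^ (i : ℕ) with hxm
  have hcons5 : ∀ (a b c d e f : F), (![a, b, c, d, e, f] : Fin 6 → F) 5 = f :=
    fun _ _ _ _ _ _ => rfl
  have hcons4 : ∀ (a b c d e : F), (![a, b, c, d, e] : Fin 5 → F) 4 = e :=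
    fun _ _ _ _ _ => rfl
  have hrow5 : ∀ (v0 v1 v2 v3 v4 v5 : Fin 6 → F),
      (![v0, v1, v2, v3, v4, v5]) 5 = v5 := fun _ _ _ _ _ _ => rfl
  have hsq : ∀ (x : F) (a : ℕ), (x ^ q ^ a) ^ q = x ^ q ^ (a + 1) := fun x a => by
    rw [← pow_mul, ← pow_succ]
  have hsq1 : ∀ x : F, (x ^ q) ^ q = x ^ q ^ 2 := fun x => by
    rw [← pow_mul, ← pow_two]
  have hsqb : ∀ (x : F) (b : ℕ), (x ^ q) ^ q ^ b = x ^ q ^ (1 + b) := fun x b => by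
    rw [← pow_mul, show q * q ^ b = q ^ (1 + b) from by rw [pow_add, pow_one]]
  have hv0 : ((0 : Fin 6) : ℕ) = 0 := rfl
  have hv1 : ((1 : Fin 6) : ℕ) = 1 := rfl
  have hv2 : ((2 : Fin 6) : ℕ) = 2 := rfl
  have hv3 : ((3 : Fin 6) : ℕ) = 3 := rfl
  have hv4 : ((4 : Fin 6) : ℕ) = 4 := rfl
  have hv5 : ((5 : Fin 6) : ℕ) = 5 := rfl
  set D : Matrix (Fin 6) (Fin 6) F :=
    !![xm 0, 1, 0, 1, 0, c;
      c ^ q, xm 1, 1, 0, 1, 0;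
      0, c ^ (q ^ 2), xm 2, 1, 0, 1;
      1, 0, c ^ (q ^ 3), xm 3, 1, 0;
      0, 1, 0, c ^ (q ^ 4), xm 4, 1;
      1, 0, 1, 0, c ^ (q ^ 5), xm 5] with hD
  have hPdet : Pdet q c xm = D.det := by
    rw [hD]; simp only [Pdet]
  -- rows annihilate Frobenius vectors of kernel elements
  have hrowlem : ∀ u : F, (u ^ q + u ^ q ^ 3 + c * u ^ q ^ 5 = m * u) → ∀ t : ℕ,
      m ^ q ^ t * u ^ q ^ t + (u ^ q ^ (t + 1) + u ^ q ^ (t + 3) + c ^ q ^ t * u ^ q ^ (t + 5)) = 0 := by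
    intro u hu t
    have h1 := congrArg (φ t) hu
    simp only [map_add, map_mul, map_pow] at h1
    simp only [hphi] at h1
    rw [show ∀ x : F, (x ^ q ^ t) ^ q = x ^ q ^ (t + 1) from fun x => by
        rw [← pow_mul, ← pow_succ], hcomp, hcomp, add_comm t 3, add_comm t 5] at h1
    linear_combination h1 + CharTwo.add_self_eq_zero (m ^ q ^ t * u ^ q ^ t)
  set vv : F → (Fin 6 → F) := fun u => ![u, u ^ q ^ 1, u ^ q ^ 2, u ^ q ^ 3, u ^ q ^ 4, u ^ q ^ 5]
    with hvv
  have hker : ∀ u : F, (u ^ q + u ^ q ^ 3 + c * u ^ q ^ 5 = m * u) → D.mulVec (vv u) = 0 := by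
    intro u hu
    have hr := hrowlem u hu
    funext i
    fin_cases i
    · have h := hr 0
      simp only [pow_zero, pow_one] at h
      simp [hD, hvv, hxm, Matrix.cons_mulVec, Matrix.cons_dotProduct, dotProduct,
        hrow5, hcons5, hcons4, hv0, hv1, hv2, hv3, hv4, hv5]
      linear_combination h
    · have h := hr 1
      norm_num [hpow6] at h
      simp [hD, hvv, hxm, Matrix.cons_mulVec, Matrix.cons_dotProduct, dotProduct,
        hrow5, hcons5, hcons4, hv0, hv1, hv2, hv3, hv4, hv5]
      linear_combination h
    · have h := hr 2
      norm_num [h7] at h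
      simp [hD, hvv, hxm, Matrix.cons_mulVec, Matrix.cons_dotProduct, dotProduct,
        hrow5, hcons5, hcons4, hv0, hv1, hv2, hv3, hv4, hv5]
      linear_combination h
    · have h := hr 3
      norm_num [hpow6, h8] at h
      simp [hD, hvv, hxm, Matrix.cons_mulVec, Matrix.cons_dotProduct, dotProduct,
        hrow5, hcons5, hcons4, hv0, hv1, hv2, hv3, hv4, hv5]
      linear_combination h
    · have h := hr 4
      norm_num [h7, h9] at h
      simp [hD, hvv, hxm, Matrix.cons_mulVec, Matrix.cons_dotProduct, dotProduct,
        hrow5, hcons5, hcons4, hv0, hv1, hv2, hv3, hv4, hv5]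
      linear_combination h
    · have h := hr 5
      norm_num [hpow6, h8, h10] at h
      simp [hD, hvv, hxm, Matrix.cons_mulVec, Matrix.cons_dotProduct, dotProduct,
        hrow5, hcons5, hcons4, hv0, hv1, hv2, hv3, hv4, hv5]
      linear_combination h
  have hvz : vv z ≠ 0 := by
    intro h
    apply hz
    have := congrFun h 0
    simpa [hvv] using this
  have hdetD : D.det = 0 :=
    Matrix.exists_mulVec_eq_zero_iff.mp ⟨vv z, hvz, hker z hmz⟩
  -- linear independence of the two Frobenius vectors
  have hli : LinearIndependent F ![vv z, vv y] := by
    rw [LinearIndependent.pair_iff' hvz]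
    intro a ha
    have h0' := congrFun ha 0
    have h1' := congrFun ha 1
    simp only [hvv, Pi.smul_apply, Matrix.cons_val_zero, Matrix.cons_val_one, Matrix.head_cons,
      smul_eq_mul] at h0' h1'
    have haq : a ^ q = a := by
      rw [pow_one] at h1'
      have h3 : a ^ q * z ^ q = y ^ q := by rw [← mul_pow, h0']
      have h4 : a ^ q * z ^ q = a * z ^ q := by rw [h3, ← h1']
      exact mul_right_cancel₀ (pow_ne_zero q hz) h4
    exact hcon a haq h0'.symm
  -- kernel / range dimension count
  set L : (Fin 6 → F) →ₗ[F] (Fin 6 → F) := D.mulVecLin with hL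
  have hky : vv y ∈ LinearMap.ker L := by
    rw [LinearMap.mem_ker, hL, Matrix.mulVecLin_apply]
    exact hker y hmy
  have hkz : vv z ∈ LinearMap.ker L := by
    rw [LinearMap.mem_ker, hL, Matrix.mulVecLin_apply]
    exact hker z hmz
  have h2K : 2 ≤ Module.finrank F (LinearMap.ker L) := by
    have hspan : Submodule.span F (Set.range ![vv z, vv y]) ≤ LinearMap.ker L := by
      rw [Submodule.span_le]
      rintro _ ⟨i, rfl⟩
      fin_cases i
      · exact hkz
      · exact hky
    calc (2 : ℕ) = Module.finrank F (Submodule.span F (Set.range ![vv z, vv y])) := by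
          rw [finrank_span_eq_card hli, Fintype.card_fin]
    _ ≤ _ := Submodule.finrank_mono hspan
  have hrange : Module.finrank F (LinearMap.range L) ≤ 4 := by
    have h6 := LinearMap.finrank_range_add_finrank_ker L
    rw [Module.finrank_pi, Fintype.card_fin] at h6
    omega
  -- five dependent columns
  set csel : Fin 5 → Fin 6 := ![2, 3, 4, 5, 0] with hcsel
  set w : Fin 5 → (Fin 6 → F) := fun b => D.mulVec (Pi.single (csel b) 1) with hw
  have hwmem : ∀ b, w b ∈ LinearMap.range L := fun b =>
    ⟨Pi.single (csel b) 1, (Matrix.mulVecLin_apply _ _)⟩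
  have hnoli : ¬ LinearIndependent F w := by
    intro hw'
    have h5 : (5 : ℕ) ≤ Module.finrank F (LinearMap.range L) := by
      calc (5 : ℕ) = Module.finrank F (Submodule.span F (Set.range w)) := by
            rw [finrank_span_eq_card hw', Fintype.card_fin]
      _ ≤ _ := Submodule.finrank_mono (Submodule.span_le.mpr (Set.range_subset_iff.mpr hwmem))
    omega
  obtain ⟨g, hgsum, b0, hgb0⟩ := Fintype.not_linearIndependent_iff.mp hnoli
  set M : Matrix (Fin 5) (Fin 5) F := D.submatrix Fin.succ csel with hM
  have hMg : M.mulVec g = 0 := by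
    funext a
    have hh := congrFun hgsum (Fin.succ a)
    simp only [Finset.sum_apply, Pi.smul_apply, smul_eq_mul, Pi.zero_apply] at hh
    calc (M.mulVec g) a = ∑ b, D (Fin.succ a) (csel b) * g b := by
          simp [hM, Matrix.mulVec, dotProduct, Matrix.submatrix_apply]
    _ = ∑ b, g b * w b (Fin.succ a) := by
          refine Finset.sum_congr rfl fun b _ => ?_
          rw [hw]
          simp [Matrix.mulVec_single]
          ring
    _ = 0 := hh
  have hg0 : g ≠ 0 := by
    intro h
    exact hgb0 (by rw [h]; rfl)
  have hdetM : M.det = 0 := Matrix.exists_mulVec_eq_zero_iff.mp ⟨g, hg0, hMg⟩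
  have hMexp : M = !![(1 : F), 0, 1, 0, c ^ q;
      m ^ q ^ 2, 1, 0, 1, 0;
      c ^ q ^ 3, m ^ q ^ 3, 1, 0, 1;
      0, c ^ q ^ 4, m ^ q ^ 4, 1, 0;
      1, 0, c ^ q ^ 5, m ^ q ^ 5, 1] := by
    ext a b
    fin_cases a <;> fin_cases b <;>
      simp [hM, hD, hcsel, hxm, Matrix.submatrix_apply, hcons5, hcons4, hv0, hv1, hv2, hv3, hv4, hv5]
  have hMdet0 : ∀ A : Matrix (Fin 5) (Fin 5) F, A = M → A.det = 0 := fun A hA => by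
    rw [hA]; exact hdetM
  -- the Q determinants vanish
  have hQ : ∀ j : ℕ, j < 6 → Qdet q c j xm = 0 := by
    intro j hj
    have key : ∀ t : ℕ, φ t (Qdet q c j xm) = 0 → Qdet q c j xm = 0 := by
      intro t hkey
      rw [hphi] at hkey
      exact pow_eq_zero_iff (pow_ne_zero t hq0) |>.mp hkey
    interval_cases j
    · refine key 1 ?_
      simp only [Qdet, Gdet]
      rw [RingHom.map_det]
      apply hMdet0
      rw [hMexp]
      ext a b
      fin_cases a <;> fin_cases b <;>
        simp [Matrix.map_apply, hphi, hxm, hcomp, hsq, hsq1, hsqb, hpow6, h7, h8, h9, h10, h11,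
          pow_zero, pow_one, Fin.val_natCast, hq0, hv0, hv1, hv2, hv3, hv4, hv5]
    · refine key 0 ?_
      simp only [Qdet, Gdet]
      rw [RingHom.map_det]
      apply hMdet0
      rw [hMexp]
      ext a b
      fin_cases a <;> fin_cases b <;>
        simp [Matrix.map_apply, hphi, hxm, hcomp, hsq, hsq1, hsqb, hpow6, h7, h8, h9, h10, h11,
          pow_zero, pow_one, Fin.val_natCast, hq0, hv0, hv1, hv2, hv3, hv4, hv5]
    · refine key 5 ?_
      simp only [Qdet, Gdet]
      rw [RingHom.map_det]
      apply hMdet0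
      rw [hMexp]
      ext a b
      fin_cases a <;> fin_cases b <;>
        simp [Matrix.map_apply, hphi, hxm, hcomp, hsq, hsq1, hsqb, hpow6, h7, h8, h9, h10, h11,
          pow_zero, pow_one, Fin.val_natCast, hq0, hv0, hv1, hv2, hv3, hv4, hv5]
    · refine key 4 ?_
      simp only [Qdet, Gdet]
      rw [RingHom.map_det]
      apply hMdet0
      rw [hMexp]
      ext a b
      fin_cases a <;> fin_cases b <;>
        simp [Matrix.map_apply, hphi, hxm, hcomp, hsq, hsq1, hsqb, hpow6, h7, h8, h9, h10, h11,
          pow_zero, pow_one, Fin.val_natCast, hq0, hv0, hv1, hv2, hv3, hv4, hv5]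
    · refine key 3 ?_
      simp only [Qdet, Gdet]
      rw [RingHom.map_det]
      apply hMdet0
      rw [hMexp]
      ext a b
      fin_cases a <;> fin_cases b <;>
        simp [Matrix.map_apply, hphi, hxm, hcomp, hsq, hsq1, hsqb, hpow6, h7, h8, h9, h10, h11,
          pow_zero, pow_one, Fin.val_natCast, hq0, hv0, hv1, hv2, hv3, hv4, hv5]
    · refine key 2 ?_
      simp only [Qdet, Gdet]
      rw [RingHom.map_det]
      apply hMdet0
      rw [hMexp]
      ext a b
      fin_cases a <;> fin_cases b <;>
        simp [Matrix.map_apply, hphi, hxm, hcomp, hsq, hsq1, hsqb, hpow6, h7, h8, h9, h10, h11,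
          pow_zero, pow_one, Fin.val_natCast, hq0, hv0, hv1, hv2, hv3, hv4, hv5]
  -- conclude
  have hP0 : Pdet q c xm = 0 := hPdet.trans hdetD
  by_cases hm : m = 0
  · refine h0 ?_
    have hxm0 : xm = fun _ => 0 := funext fun i => by
      simp [hxm, hm, zero_pow (pow_ne_zero (i : ℕ) hq0)]
    rw [← hxm0]
    exact ⟨hP0, hQ⟩
  · refine hx xm (fun i => pow_ne_zero _ hm) ⟨hP0, hQ⟩
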